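/- Let G be a finite graph that is K_3-free, (K_1+2K_2)-free, and C_6-free (as induced subgraphs), and let I be a maximal independent set of vertices of G. Then the graph G' obtained from G by adding a new vertex v' adjacent exactly to the vertices of I contains no induced 6-cycle. -/

import Mathlib

/-- The 6-cycle `C₆`. -/
def C6 : SimpleGraph (ZMod 6) :=
  SimpleGraph.fromRel (fun i j => j = i + 1)

/-- The graph `K₁ + 2K₂`: vertex 0 is isolated, with edges 1-2 and 3-4. -/
def K1plus2K2 : SimpleGraph (Fin 5) :=
  SimpleGraph.fromRel (fun i j => (i = 1 ∧ j = 2) ∨ (i = 3 ∧ j = 4))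

/-- `I` is an independent set of vertices of `G`. -/
def IsIndep {V : Type*} (G : SimpleGraph V) (I : Set V) : Prop :=
  ∀ x ∈ I, ∀ y ∈ I, ¬ G.Adj x y

/-- The graph obtained from `G` by adding a new vertex (`none`) adjacent exactly to
the vertices of `I`. -/
def addVertex {V : Type*} (G : SimpleGraph V) (I : Set V) : SimpleGraph (Option V) :=
  SimpleGraph.fromRel (fun a b =>
    (∃ x y, a = some x ∧ b = some y ∧ G.Adj x y) ∨ (a = none ∧ ∃ x ∈ I, b = some x))

lemma addVertex_adj_some {V : Type*} (G : SimpleGraph V) (I : Set V) (x y : V) :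
    (addVertex G I).Adj (some x) (some y) ↔ G.Adj x y := by
  simp [addVertex, SimpleGraph.fromRel_adj]
  constructor
  · rintro ⟨hne, h | h⟩
    · exact h
    · exact h.symm
  · intro h; exact ⟨h.ne, Or.inl h⟩

lemma addVertex_adj_none {V : Type*} (G : SimpleGraph V) (I : Set V) (x : V) :
    (addVertex G I).Adj none (some x) ↔ x ∈ I := by
  simp [addVertex, SimpleGraph.fromRel_adj]

def rot (k : ZMod 6) : C6 ↪g C6 :=
  ⟨(Equiv.addRight k).toEmbedding, by
    intro i j
    have e1 : ∀ i j : ZMod 6, (j + k = i + k + 1) ↔ j = i + 1 := by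
      intro i j; rw [add_right_comm, add_left_inj]
    simp [C6, SimpleGraph.fromRel_adj, e1, add_left_inj]⟩

lemma triangle {V : Type*} {G : SimpleGraph V} (h : G.CliqueFree 3) {u v w : V}
    (huv : G.Adj u v) (hvw : G.Adj v w) (huw : G.Adj u w) : False := by
  classical
  exact h ({u, v, w} : Finset V) (SimpleGraph.is3Clique_triple_iff.mpr ⟨huv, huw, hvw⟩)

lemma key {V : Type*} (G : SimpleGraph V) (I : Set V)
    (hK3 : G.CliqueFree 3)
    (hK1plus2K2 : ¬ Nonempty (K1plus2K2 ↪g G))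
    (hind : IsIndep G I)
    (hmax : ∀ J : Set V, IsIndep G J → I ⊆ J → J = I)
    (f : C6 ↪g addVertex G I) (h0 : f 0 = none) : False := by
  have hsome : ∀ k : ZMod 6, k ≠ 0 → ∃ v, f k = some v := by
    intro k hk
    cases hfk : f k with
    | none => exact absurd (f.injective (hfk.trans h0.symm)) hk
    | some v => exact ⟨v, rfl⟩
  obtain ⟨a, ha⟩ := hsome 1 (by decide)
  obtain ⟨b, hb⟩ := hsome 2 (by decide)
  obtain ⟨c, hc⟩ := hsome 3 (by decide)
  obtain ⟨d, hd⟩ := hsome 4 (by decide)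
  obtain ⟨e, he⟩ := hsome 5 (by decide)
  -- adjacency transfer
  have adj : ∀ (i j : ZMod 6) (u v : V), f i = some u → f j = some v →
      (G.Adj u v ↔ C6.Adj i j) := by
    intro i j u v hu hv
    rw [← addVertex_adj_some G I, ← hu, ← hv, f.map_rel_iff]
  have mem : ∀ (j : ZMod 6) (u : V), f j = some u → (u ∈ I ↔ C6.Adj 0 j) := by
    intro j u hu
    rw [← addVertex_adj_none G I, ← h0, ← hu, f.map_rel_iff]
  have hab : G.Adj a b := (adj 1 2 a b ha hb).mpr (by simp [C6, SimpleGraph.fromRel_adj]; decide)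
  have hbc : G.Adj b c := (adj 2 3 b c hb hc).mpr (by simp [C6, SimpleGraph.fromRel_adj]; decide)
  have hcd : G.Adj c d := (adj 3 4 c d hc hd).mpr (by simp [C6, SimpleGraph.fromRel_adj]; decide)
  have hde : G.Adj d e := (adj 4 5 d e hd he).mpr (by simp [C6, SimpleGraph.fromRel_adj]; decide)
  have hac : ¬ G.Adj a c := fun h => (by simp [C6, SimpleGraph.fromRel_adj]; decide : ¬ C6.Adj 1 3) ((adj 1 3 a c ha hc).mp h)
  have had : ¬ G.Adj a d := fun h => (by simp [C6, SimpleGraph.fromRel_adj]; decide : ¬ C6.Adj 1 4) ((adj 1 4 a d ha hd).mp h)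
  have hae : ¬ G.Adj a e := fun h => (by simp [C6, SimpleGraph.fromRel_adj]; decide : ¬ C6.Adj 1 5) ((adj 1 5 a e ha he).mp h)
  have hbd : ¬ G.Adj b d := fun h => (by simp [C6, SimpleGraph.fromRel_adj]; decide : ¬ C6.Adj 2 4) ((adj 2 4 b d hb hd).mp h)
  have hbe : ¬ G.Adj b e := fun h => (by simp [C6, SimpleGraph.fromRel_adj]; decide : ¬ C6.Adj 2 5) ((adj 2 5 b e hb he).mp h)
  have hce : ¬ G.Adj c e := fun h => (by simp [C6, SimpleGraph.fromRel_adj]; decide : ¬ C6.Adj 3 5) ((adj 3 5 c e hc he).mp h)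
  have haI : a ∈ I := (mem 1 a ha).mpr (by simp [C6, SimpleGraph.fromRel_adj]; decide)
  have heI : e ∈ I := (mem 5 e he).mpr (by simp [C6, SimpleGraph.fromRel_adj]; decide)
  have hbI : b ∉ I := fun h => (by simp [C6, SimpleGraph.fromRel_adj]; decide : ¬ C6.Adj 0 2) ((mem 2 b hb).mp h)
  have hcI : c ∉ I := fun h => (by simp [C6, SimpleGraph.fromRel_adj]; decide : ¬ C6.Adj 0 3) ((mem 3 c hc).mp h)
  have hdI : d ∉ I := fun h => (by simp [C6, SimpleGraph.fromRel_adj]; decide : ¬ C6.Adj 0 4) ((mem 4 d hd).mp h)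
  -- c has a neighbor in I by maximality
  have hx : ∃ x ∈ I, G.Adj x c := by
    by_contra h
    push_neg at h
    have hJ : IsIndep G (insert c I) := by
      rintro p (rfl | hp) q (rfl | hq)
      · exact G.irrefl
      · exact fun hadj => h q hq hadj.symm
      · exact fun hadj => h p hp hadj
      · exact hind p hp q hq
    have := hmax _ hJ (Set.subset_insert c I)
    exact hcI (this ▸ Set.mem_insert c I)
  obtain ⟨x, hxI, hxc⟩ := hx
  have hxa : ¬ G.Adj x a := fun h => hind x hxI a haI h
  have hxe : ¬ G.Adj x e := fun h => hind x hxI e heI h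
  have hxb : ¬ G.Adj x b := fun h => triangle hK3 h hbc hxc
  have hxd : ¬ G.Adj x d := fun h => triangle hK3 hxc hcd h
  -- distinctness
  have nab : a ≠ b := fun h => (by decide : (1:ZMod 6) ≠ 2) (f.injective (by rw [ha, hb, h]))
  have nad : a ≠ d := fun h => (by decide : (1:ZMod 6) ≠ 4) (f.injective (by rw [ha, hd, h]))
  have nae : a ≠ e := fun h => (by decide : (1:ZMod 6) ≠ 5) (f.injective (by rw [ha, he, h]))
  have nbd : b ≠ d := fun h => (by decide : (2:ZMod 6) ≠ 4) (f.injective (by rw [hb, hd, h]))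
  have nbe : b ≠ e := fun h => (by decide : (2:ZMod 6) ≠ 5) (f.injective (by rw [hb, he, h]))
  have nde : d ≠ e := fun h => (by decide : (4:ZMod 6) ≠ 5) (f.injective (by rw [hd, he, h]))
  have nxa : x ≠ a := fun h => hac (h ▸ hxc)
  have nxe : x ≠ e := fun h => hce (G.adj_symm (h ▸ hxc))
  have nxb : x ≠ b := fun h => hbI (h ▸ hxI)
  have nxd : x ≠ d := fun h => hdI (h ▸ hxI)
  have nba : b ≠ a := nab.symm
  have nda : d ≠ a := nad.symm
  have nea : e ≠ a := nae.symm
  have ndb : d ≠ b := nbd.symm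
  have neb : e ≠ b := nbe.symm
  have ned : e ≠ d := nde.symm
  have nax : a ≠ x := nxa.symm
  have nbx : b ≠ x := nxb.symm
  have ndx : d ≠ x := nxd.symm
  have nex : e ≠ x := nxe.symm
  have hba : G.Adj b a := hab.symm
  have hed : G.Adj e d := hde.symm
  have hax : ¬ G.Adj a x := fun h => hxa h.symm
  have hbx : ¬ G.Adj b x := fun h => hxb h.symm
  have hdx : ¬ G.Adj d x := fun h => hxd h.symm
  have hex : ¬ G.Adj e x := fun h => hxe h.symm
  have hda : ¬ G.Adj d a := fun h => had h.symm
  have hea : ¬ G.Adj e a := fun h => hae h.symm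
  have hdb : ¬ G.Adj d b := fun h => hbd h.symm
  have heb : ¬ G.Adj e b := fun h => hbe h.symm
  have hK : ∀ i j : Fin 5, K1plus2K2.Adj i j ↔
      ((i = 1 ∧ j = 2) ∨ (i = 2 ∧ j = 1) ∨ (i = 3 ∧ j = 4) ∨ (i = 4 ∧ j = 3)) := by
    simp only [K1plus2K2, SimpleGraph.fromRel_adj]
    decide
  apply hK1plus2K2
  refine ⟨⟨⟨![x, a, b, d, e], ?_⟩, ?_⟩⟩
  · intro i j hij
    fin_cases i <;> fin_cases j <;>
      first
        | rfl
        | exact absurd hij (by assumption)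
  · intro i j
    rw [hK]
    fin_cases i <;> fin_cases j <;>
      first
        | exact iff_of_true (by assumption) (by decide)
        | exact iff_of_false G.irrefl (by decide)
        | exact iff_of_false (by assumption) (by decide)

theorem addVertex_C6_free {V : Type*} [Fintype V] (G : SimpleGraph V) (I : Set V)
    (hK3 : G.CliqueFree 3)
    (hK1plus2K2 : ¬ Nonempty (K1plus2K2 ↪g G))
    (hC6 : ¬ Nonempty (C6 ↪g G))
    (hind : IsIndep G I)
    (hmax : ∀ J : Set V, IsIndep G J → I ⊆ J → J = I) :
    ¬ Nonempty (C6 ↪g addVertex G I) := by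
  rintro ⟨f⟩
  by_cases hnone : ∀ i, f i ≠ none
  · choose g hg using fun i => Option.ne_none_iff_exists'.mp (hnone i)
    refine hC6 ⟨⟨⟨g, ?_⟩, ?_⟩⟩
    · intro i j h
      exact f.injective (by rw [hg i, hg j, h])
    · intro i j
      show G.Adj (g i) (g j) ↔ C6.Adj i j
      rw [← addVertex_adj_some G I, ← hg, ← hg, f.map_rel_iff]
  · push_neg at hnone
    obtain ⟨i0, hi0⟩ := hnone
    apply key G I hK3 hK1plus2K2 hind hmax (f.comp (rot i0))
    show f ((0 : ZMod 6) + i0) = none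
    rw [zero_add, hi0]
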